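/- Let S(u) := max(0, 1 − |u|) be the linear B-spline and h > 0. Then for all X, X' ∈ ℝ: Σ_{k∈ℤ} | S((k·h − X)/h) − S((k·h − X')/h) | ≤ 2·|X − X'|/h. -/

import Mathlib

lemma S0 (z : ℝ) (k : ℤ) (hk : (k:ℝ) ≤ z - 1 ∨ z + 1 ≤ k) :
    max 0 (1 - |(k:ℝ) - z|) = 0 := by
  apply max_eq_left
  rcases hk with h | h
  · rw [abs_of_nonpos (by linarith)]; linarith
  · rw [abs_of_nonneg (by linarith)]; linarith

lemma Slo (z : ℝ) (k : ℤ) (h1 : z - 1 ≤ k) (h2 : (k:ℝ) ≤ z) :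
    max 0 (1 - |(k:ℝ) - z|) = 1 - (z - k) := by
  have ha : |(k:ℝ) - z| = z - k := by
    rw [abs_of_nonpos (by linarith)]; ring
  rw [ha]; apply max_eq_right; linarith

lemma Shi (z : ℝ) (k : ℤ) (h1 : z ≤ k) (h2 : (k:ℝ) ≤ z + 1) :
    max 0 (1 - |(k:ℝ) - z|) = 1 - ((k:ℝ) - z) := by
  rw [abs_of_nonneg (by linarith)]
  apply max_eq_right; linarith

lemma aux_core (y y' : ℝ) (m m' : ℤ) (hle : y ≤ y')
    (h1 : (m:ℝ) ≤ y) (h2 : y < (m:ℝ) + 1)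
    (h1' : (m':ℝ) ≤ y') (h2' : y' < (m':ℝ) + 1) :
    ∑' k : ℤ, |max 0 (1 - |(k:ℝ) - y|) - max 0 (1 - |(k:ℝ) - y'|)| ≤ 2 * (y' - y) := by
  have hmm' : m ≤ m' := by
    have hr : (m:ℝ) < (m':ℝ) + 1 := by linarith
    have : (m:ℝ) < ((m' + 1 : ℤ) : ℝ) := by push_cast; linarith
    have : m < m' + 1 := by exact_mod_cast this
    omega
  rcases eq_or_lt_of_le hmm' with he | hlt
  · -- m' = m
    subst he
    rw [tsum_eq_sum (s := {m, m+1}) ?_]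
    · rw [Finset.sum_pair (by omega : m ≠ m + 1)]
      rw [Slo y m (by linarith) h1, Slo y' m (by linarith) h1',
          Shi y (m+1) (by push_cast; linarith) (by push_cast; linarith),
          Shi y' (m+1) (by push_cast; linarith) (by push_cast; linarith)]
      have c1 : |1 - (y - (m:ℝ)) - (1 - (y' - (m:ℝ)))| = y' - y := by
        rw [show (1 - (y - (m:ℝ)) - (1 - (y' - (m:ℝ)))) = y' - y by ring]
        exact abs_of_nonneg (by linarith)
      have c2 : |1 - (((m+1:ℤ):ℝ) - y) - (1 - (((m+1:ℤ):ℝ) - y'))| = y' - y := by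
        rw [show (1 - (((m+1:ℤ):ℝ) - y) - (1 - (((m+1:ℤ):ℝ) - y'))) = -(y' - y) by ring,
            abs_neg]
        exact abs_of_nonneg (by linarith)
      rw [c1, c2]; linarith
    · intro k hk
      simp only [Finset.mem_insert, Finset.mem_singleton] at hk
      push_neg at hk
      have hcase : k ≤ m - 1 ∨ m + 2 ≤ k := by omega
      have hz : max 0 (1 - |(k:ℝ) - y|) = 0 := by
        apply S0; rcases hcase with hc | hc
        · left; have : (k:ℝ) ≤ (m:ℝ) - 1 := by exact_mod_cast hc
          linarith
        · right; have : ((m:ℝ) + 2) ≤ (k:ℝ) := by exact_mod_cast hc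
          linarith
      have hz' : max 0 (1 - |(k:ℝ) - y'|) = 0 := by
        apply S0; rcases hcase with hc | hc
        · left; have : (k:ℝ) ≤ (m:ℝ) - 1 := by exact_mod_cast hc
          linarith
        · right; have : ((m:ℝ) + 2) ≤ (k:ℝ) := by exact_mod_cast hc
          linarith
      rw [hz, hz', sub_zero, abs_zero]
  · rcases eq_or_lt_of_le (by omega : m + 1 ≤ m') with he2 | hlt2
    · -- m' = m + 1
      subst he2
      have hy'lo : (m:ℝ) + 1 ≤ y' := by push_cast at h1'; linarith
      have hy'hi : y' < (m:ℝ) + 2 := by push_cast at h2'; linarith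
      rw [tsum_eq_sum (s := {m, m+1, m+2}) ?_]
      · rw [Finset.sum_insert (by simp only [Finset.mem_insert, Finset.mem_singleton]; omega),
            Finset.sum_pair (by omega : m + 1 ≠ m + 2)]
        rw [Slo y m (by linarith) h1,
            S0 y' m (by left; linarith),
            Shi y (m+1) (by push_cast; linarith) (by push_cast; linarith),
            Slo y' (m+1) (by push_cast; linarith) (by push_cast; linarith),
            S0 y (m+2) (by right; push_cast; linarith),
            Shi y' (m+2) (by push_cast; linarith) (by push_cast; linarith)]
        have c1 : |1 - (y - (m:ℝ)) - 0| = 1 - (y - (m:ℝ)) := by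
          rw [sub_zero]; exact abs_of_nonneg (by linarith)
        have c2 : |1 - (((m+1:ℤ):ℝ) - y) - (1 - (y' - ((m+1:ℤ):ℝ)))| ≤ y' - y := by
          apply abs_le.mpr
          constructor <;> push_cast <;> [linarith; linarith]
        have c3 : |0 - (1 - (((m+2:ℤ):ℝ) - y'))| = 1 - (((m+2:ℤ):ℝ) - y') := by
          rw [zero_sub, abs_neg]; exact abs_of_nonneg (by push_cast; linarith)
        rw [c1, c3]
        push_cast at c2 ⊢
        linarith
      · intro k hk
        simp only [Finset.mem_insert, Finset.mem_singleton] at hk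
        push_neg at hk
        have hcase : k ≤ m - 1 ∨ m + 3 ≤ k := by omega
        have hz : max 0 (1 - |(k:ℝ) - y|) = 0 := by
          apply S0; rcases hcase with hc | hc
          · left; have : (k:ℝ) ≤ (m:ℝ) - 1 := by exact_mod_cast hc
            linarith
          · right; have : ((m:ℝ) + 3) ≤ (k:ℝ) := by exact_mod_cast hc
            linarith
        have hz' : max 0 (1 - |(k:ℝ) - y'|) = 0 := by
          apply S0; rcases hcase with hc | hc
          · left; have : (k:ℝ) ≤ (m:ℝ) - 1 := by exact_mod_cast hc
            linarith
          · right; have : ((m:ℝ) + 3) ≤ (k:ℝ) := by exact_mod_cast hc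
            linarith
        rw [hz, hz', sub_zero, abs_zero]
    · -- m + 2 ≤ m'
      have hmm2 : m + 2 ≤ m' := by omega
      have hmr : (m:ℝ) + 2 ≤ (m':ℝ) := by exact_mod_cast hmm2
      rw [tsum_eq_sum (s := {m, m+1, m', m'+1}) ?_]
      · rw [Finset.sum_insert
              (by simp only [Finset.mem_insert, Finset.mem_singleton]; omega),
            Finset.sum_insert
              (by simp only [Finset.mem_insert, Finset.mem_singleton]; omega),
            Finset.sum_pair (by omega : m' ≠ m' + 1)]
        rw [Slo y m (by linarith) h1,
            S0 y' m (by left; linarith),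
            Shi y (m+1) (by push_cast; linarith) (by push_cast; linarith),
            S0 y' (m+1) (by left; push_cast; linarith),
            S0 y m' (by right; linarith),
            Slo y' m' (by linarith) h1',
            S0 y (m'+1) (by right; push_cast; linarith),
            Shi y' (m'+1) (by push_cast; linarith) (by push_cast; linarith)]
        have c1 : |1 - (y - (m:ℝ)) - 0| = 1 - (y - (m:ℝ)) := by
          rw [sub_zero]; exact abs_of_nonneg (by linarith)
        have c2 : |1 - (((m+1:ℤ):ℝ) - y) - 0| = 1 - (((m+1:ℤ):ℝ) - y) := by
          rw [sub_zero]; exact abs_of_nonneg (by push_cast; linarith)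
        have c3 : |0 - (1 - (y' - (m':ℝ)))| = 1 - (y' - (m':ℝ)) := by
          rw [zero_sub, abs_neg]; exact abs_of_nonneg (by linarith)
        have c4 : |0 - (1 - (((m'+1:ℤ):ℝ) - y'))| = 1 - (((m'+1:ℤ):ℝ) - y') := by
          rw [zero_sub, abs_neg]; exact abs_of_nonneg (by push_cast; linarith)
        rw [c1, c2, c3, c4]
        push_cast
        linarith
      · intro k hk
        simp only [Finset.mem_insert, Finset.mem_singleton] at hk
        push_neg at hk
        have hz : max 0 (1 - |(k:ℝ) - y|) = 0 := by
          apply S0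
          have hcase : k ≤ m - 1 ∨ m + 2 ≤ k := by omega
          rcases hcase with hc | hc
          · left; have : (k:ℝ) ≤ (m:ℝ) - 1 := by exact_mod_cast hc
            linarith
          · right; have : ((m:ℝ) + 2) ≤ (k:ℝ) := by exact_mod_cast hc
            linarith
        have hz' : max 0 (1 - |(k:ℝ) - y'|) = 0 := by
          apply S0
          have hcase : k ≤ m' - 1 ∨ m' + 2 ≤ k := by omega
          rcases hcase with hc | hc
          · left; have : (k:ℝ) ≤ (m':ℝ) - 1 := by exact_mod_cast hc
            linarith
          · right; have : ((m':ℝ) + 2) ≤ (k:ℝ) := by exact_mod_cast hc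
            linarith
        rw [hz, hz', sub_zero, abs_zero]

lemma aux_key (y y' : ℝ) (hle : y ≤ y') :
    ∑' k : ℤ, |max 0 (1 - |(k:ℝ) - y|) - max 0 (1 - |(k:ℝ) - y'|)| ≤ 2 * (y' - y) :=
  aux_core y y' ⌊y⌋ ⌊y'⌋ hle (Int.floor_le y) (Int.lt_floor_add_one y)
    (Int.floor_le y') (Int.lt_floor_add_one y')

/-- ℓ¹ Lipschitz estimate for the linear-B-spline deposition coefficients: for nodes
`kh`, `k ∈ ℤ`, of a uniform grid of step `h`,
`Σ_k |S((kh − X)/h) − S((kh − X')/h)| ≤ 2|X − X'|/h`. -/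
theorem spline_deposition_l1_lipschitz
    (h : ℝ) (hh : 0 < h) (X X' : ℝ) :
    ∑' k : ℤ, |max 0 (1 - |((k : ℝ) * h - X) / h|) - max 0 (1 - |((k : ℝ) * h - X') / h|)|
      ≤ 2 * |X - X'| / h := by
  have hne : h ≠ 0 := ne_of_gt hh
  have hrw : ∀ (Z : ℝ) (k : ℤ), ((k:ℝ) * h - Z) / h = (k:ℝ) - Z / h := by
    intro Z k; field_simp
  simp only [hrw]
  have hgoal : (2:ℝ) * |X - X'| / h = 2 * |X / h - X' / h| := by
    rw [div_sub_div_same, abs_div, abs_of_pos hh]; ring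
  rw [hgoal]
  rcases le_total (X / h) (X' / h) with hle | hle
  · rw [abs_of_nonpos (by linarith)]
    have := aux_key (X / h) (X' / h) hle
    linarith
  · rw [abs_of_nonneg (by linarith)]
    have h2 := aux_key (X' / h) (X / h) hle
    have heq : ∑' k : ℤ, |max 0 (1 - |(k:ℝ) - X / h|) - max 0 (1 - |(k:ℝ) - X' / h|)|
         = ∑' k : ℤ, |max 0 (1 - |(k:ℝ) - X' / h|) - max 0 (1 - |(k:ℝ) - X / h|)| :=
      tsum_congr (fun k => abs_sub_comm _ _)
    rw [heq]
    linarith
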